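/- (Knill–Laflamme condition for Wilson line errors, Proposition 3.2.) For all η, χ : L → Ĝ the following hold: if ∂ η ≠ ∂ χ then Π_pn ∘ W^{η⁻¹} ∘ W^χ ∘ Π_pn = 0, where η⁻¹ denotes the pointwise inverse family ℓ ↦ (η ℓ)⁻¹ (so that W^{η⁻¹} is the adjoint of W^η); and if ∂ η = ∂ χ then W^{η⁻¹ · χ} commutes with Π_pn and Π_pn ∘ W^{η⁻¹} ∘ W^χ ∘ Π_pn = W^{η⁻¹ · χ} ∘ Π_pn, where η⁻¹ · χ is the pointwise product ℓ ↦ (η ℓ)⁻¹ * χ ℓ. In particular, two Wilson line errors with distinct Gauss law syndromes are perfectly distinguishable on the code subspace. -/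
import Mathlib


open Finset

variable {V L : Type*} [Fintype V] [Fintype L] [DecidableEq V]
variable {G : Type*} [CommGroup G] [Fintype G]

/-- The gauge transformation `U^g` on the kinematical Hilbert space `(L → G) → ℂ`. -/
def Ugauge (s t : L → V) (g : V → G) : ((L → G) → ℂ) → ((L → G) → ℂ) :=
  fun f a => f fun ℓ => (g (s ℓ))⁻¹ * a ℓ * g (t ℓ)

/-- The Wilson line (multiplication) operator `W^χ` for a family of characters `χ`. -/
def Wline (χ : L → (G →* ℂˣ)) : ((L → G) → ℂ) → ((L → G) → ℂ) :=
  fun f a => (((∏ ℓ, χ ℓ (a ℓ))⁻¹ : ℂˣ) : ℂ) • f a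

/-- The Gauss law map `∂`, assigning to link character data the vertex charge it excites. -/
def gaussMap (s t : L → V) (χ : L → (G →* ℂˣ)) : V → (G →* ℂˣ) :=
  fun v => (∏ ℓ ∈ univ.filter fun ℓ => s ℓ = v, χ ℓ) *
    ∏ ℓ ∈ univ.filter fun ℓ => t ℓ = v, (χ ℓ)⁻¹

/-- The projection `Π_pn` onto the gauge-invariant (perspective-neutral) subspace. -/
noncomputable def piPn (s t : L → V) (G : Type*) [CommGroup G] [Fintype G] :
    ((L → G) → ℂ) → ((L → G) → ℂ) :=
  ((Fintype.card G : ℂ) ^ Fintype.card V)⁻¹ • ∑ g : V → G, Ugauge s t g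

private lemma piPn_apply (s t : L → V) (f : (L → G) → ℂ) (a : L → G) :
    piPn s t G f a = ((Fintype.card G : ℂ) ^ Fintype.card V)⁻¹ *
      ∑ g : V → G, f (fun ℓ => (g (s ℓ))⁻¹ * a ℓ * g (t ℓ)) := by
  simp [piPn, Ugauge, Finset.sum_apply]

private lemma wline_apply (ξ : L → (G →* ℂˣ)) (f : (L → G) → ℂ) (a : L → G) :
    Wline ξ f a = (((∏ ℓ, ξ ℓ (a ℓ))⁻¹ : ℂˣ) : ℂ) * f a := rfl

private lemma gaussProd (s t : L → V) (ξ : L → (G →* ℂˣ)) (g : V → G) :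
    ∏ ℓ, (ξ ℓ (g (s ℓ)))⁻¹ * ξ ℓ (g (t ℓ)) = (∏ v, gaussMap s t ξ v (g v))⁻¹ := by
  have hs : ∏ v, ∏ ℓ ∈ univ.filter fun ℓ => s ℓ = v, ξ ℓ (g v)
      = ∏ ℓ, ξ ℓ (g (s ℓ)) := by
    rw [← Finset.prod_fiberwise univ s (fun ℓ => ξ ℓ (g (s ℓ)))]
    exact Finset.prod_congr rfl fun v _ => Finset.prod_congr rfl fun ℓ hℓ => by
      rw [(Finset.mem_filter.mp hℓ).2]
  have ht : ∏ v, ∏ ℓ ∈ univ.filter fun ℓ => t ℓ = v, (ξ ℓ (g v))⁻¹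
      = ∏ ℓ, (ξ ℓ (g (t ℓ)))⁻¹ := by
    rw [← Finset.prod_fiberwise univ t (fun ℓ => (ξ ℓ (g (t ℓ)))⁻¹)]
    exact Finset.prod_congr rfl fun v _ => Finset.prod_congr rfl fun ℓ hℓ => by
      rw [(Finset.mem_filter.mp hℓ).2]
  have hR : ∏ v, gaussMap s t ξ v (g v)
      = (∏ ℓ, ξ ℓ (g (s ℓ))) * ∏ ℓ, (ξ ℓ (g (t ℓ)))⁻¹ := by
    simp only [gaussMap, MonoidHom.mul_apply, MonoidHom.finset_prod_apply, MonoidHom.inv_apply]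
    rw [Finset.prod_mul_distrib, hs, ht]
  rw [hR]
  simp [mul_inv, Finset.prod_mul_distrib, Finset.prod_inv_distrib, mul_comm]

/-- evaluating the Wilson factor on a gauge-transformed configuration -/
private lemma wfactor_transformed (s t : L → V) (ξ : L → (G →* ℂˣ)) (g : V → G) (a : L → G) :
    (∏ ℓ, ξ ℓ ((g (s ℓ))⁻¹ * a ℓ * g (t ℓ)))
      = (∏ ℓ, ξ ℓ (a ℓ)) * (∏ v, gaussMap s t ξ v (g v))⁻¹ := by
  rw [← gaussProd s t ξ g, ← Finset.prod_mul_distrib]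
  refine Finset.prod_congr rfl fun ℓ _ => ?_
  rw [map_mul, map_mul, map_inv]
  rw [mul_comm ((ξ ℓ) (g (s ℓ)))⁻¹, mul_assoc]

private lemma gauss_mul (s t : L → V) (η χ : L → (G →* ℂˣ)) :
    gaussMap s t (η⁻¹ * χ) = (gaussMap s t η)⁻¹ * gaussMap s t χ := by
  funext v
  ext x
  simp only [gaussMap, Pi.mul_apply, Pi.inv_apply, MonoidHom.mul_apply,
    MonoidHom.inv_apply, MonoidHom.finset_prod_apply, mul_inv, inv_inv,
    Finset.prod_mul_distrib, Finset.prod_inv_distrib]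
  simp [mul_comm, mul_assoc, mul_left_comm]

/-- The key scalar identity: `Π ∘ W^ξ ∘ Π = c • (W^ξ ∘ Π)` where
`c = N⁻¹ ∑_g ∏_v (∂ξ v)(g v)`. -/
private lemma key (s t : L → V) (ξ : L → (G →* ℂˣ)) :
    piPn s t G ∘ Wline ξ ∘ piPn s t G =
      ((((Fintype.card G : ℂ) ^ Fintype.card V)⁻¹ *
        ∑ g : V → G, ∏ v, ((gaussMap s t ξ v (g v) : ℂˣ) : ℂ)) •
          (Wline ξ ∘ piPn s t G)) := by
  funext f a
  have hact : ∀ (g h : V → G),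
      (fun ℓ => (h (s ℓ))⁻¹ * ((g (s ℓ))⁻¹ * a ℓ * g (t ℓ)) * h (t ℓ))
        = fun ℓ => ((g * h) (s ℓ))⁻¹ * a ℓ * (g * h) (t ℓ) := by
    intro g h; funext ℓ
    simp only [Pi.mul_apply, mul_inv]
    simp [mul_comm, mul_assoc, mul_left_comm]
  simp only [Function.comp_apply, Pi.smul_apply, smul_eq_mul]
  rw [piPn_apply]
  have step : ∀ g : V → G,
      Wline ξ (piPn s t G f) (fun ℓ => (g (s ℓ))⁻¹ * a ℓ * g (t ℓ))
        = (∏ v, ((gaussMap s t ξ v (g v) : ℂˣ) : ℂ)) *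
            ((((∏ ℓ, ξ ℓ (a ℓ))⁻¹ : ℂˣ) : ℂ) *
              (((Fintype.card G : ℂ) ^ Fintype.card V)⁻¹ *
                ∑ k : V → G, f (fun ℓ => (k (s ℓ))⁻¹ * a ℓ * k (t ℓ)))) := by
    intro g
    rw [wline_apply, piPn_apply, wfactor_transformed s t ξ g a]
    have hre : (∑ h : V → G, f (fun ℓ => (h (s ℓ))⁻¹ *
          ((g (s ℓ))⁻¹ * a ℓ * g (t ℓ)) * h (t ℓ)))
        = ∑ k : V → G, f (fun ℓ => (k (s ℓ))⁻¹ * a ℓ * k (t ℓ)) := by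
      rw [← Equiv.sum_comp (Equiv.mulLeft g)
        (fun k : V → G => f (fun ℓ => (k (s ℓ))⁻¹ * a ℓ * k (t ℓ)))]
      exact Finset.sum_congr rfl fun h _ => by rw [hact g h]; rfl
    rw [hre]
    push_cast [mul_inv, inv_inv]
    ring
  have hsum2 : (∑ g : V → G,
        Wline ξ (piPn s t G f) (fun ℓ => (g (s ℓ))⁻¹ * a ℓ * g (t ℓ)))
      = ∑ g : V → G, (∏ v, ((gaussMap s t ξ v (g v) : ℂˣ) : ℂ)) *
            ((((∏ ℓ, ξ ℓ (a ℓ))⁻¹ : ℂˣ) : ℂ) *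
              (((Fintype.card G : ℂ) ^ Fintype.card V)⁻¹ *
                ∑ k : V → G, f (fun ℓ => (k (s ℓ))⁻¹ * a ℓ * k (t ℓ)))) :=
    Finset.sum_congr rfl fun g _ => step g
  rw [hsum2, ← Finset.sum_mul, wline_apply, piPn_apply]
  ring

private lemma comm_of_gauss_one (s t : L → V) (ξ : L → (G →* ℂˣ))
    (h1 : gaussMap s t ξ = 1) :
    Wline ξ ∘ piPn s t G = piPn s t G ∘ Wline ξ := by
  funext f a
  simp only [Function.comp_apply]
  rw [wline_apply, piPn_apply, piPn_apply]
  have hs : (∑ g : V → G, Wline ξ f (fun ℓ => (g (s ℓ))⁻¹ * a ℓ * g (t ℓ)))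
      = ∑ g : V → G, (((∏ ℓ, ξ ℓ (a ℓ))⁻¹ : ℂˣ) : ℂ) *
          f (fun ℓ => (g (s ℓ))⁻¹ * a ℓ * g (t ℓ)) :=
    Finset.sum_congr rfl fun g _ => by
      rw [wline_apply, wfactor_transformed s t ξ g a, h1]
      simp
  rw [hs, ← Finset.mul_sum]
  ring

private lemma wline_comp (η χ : L → (G →* ℂˣ)) :
    Wline η⁻¹ ∘ Wline χ = Wline (η⁻¹ * χ) := by
  funext f a
  simp only [Function.comp_apply, Wline, Pi.inv_apply, Pi.mul_apply, MonoidHom.inv_apply,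
    MonoidHom.mul_apply, Finset.prod_mul_distrib, smul_eq_mul, Finset.prod_inv_distrib,
    mul_inv, inv_inv]
  push_cast [mul_inv, inv_inv]
  ring

/-- Knill–Laflamme condition for Wilson line errors (Proposition 3.2): if the Gauss law
syndromes of `η` and `χ` differ, then `Π_pn ∘ W^{η⁻¹} ∘ W^χ ∘ Π_pn = 0`; if they agree,
then `W^{η⁻¹ · χ}` commutes with `Π_pn` and
`Π_pn ∘ W^{η⁻¹} ∘ W^χ ∘ Π_pn = W^{η⁻¹ · χ} ∘ Π_pn`. -/
theorem knillLaflamme_wilson (s t : L → V) (η χ : L → (G →* ℂˣ)) :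
    (gaussMap s t η ≠ gaussMap s t χ →
        piPn s t G ∘ Wline η⁻¹ ∘ Wline χ ∘ piPn s t G = 0) ∧
      (gaussMap s t η = gaussMap s t χ →
        Wline (η⁻¹ * χ) ∘ piPn s t G = piPn s t G ∘ Wline (η⁻¹ * χ) ∧
          piPn s t G ∘ Wline η⁻¹ ∘ Wline χ ∘ piPn s t G =
            Wline (η⁻¹ * χ) ∘ piPn s t G) := by
  set ξ := η⁻¹ * χ with hξ
  have hcomp : piPn s t G ∘ Wline η⁻¹ ∘ Wline χ ∘ piPn s t G
      = piPn s t G ∘ Wline ξ ∘ piPn s t G := by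
    rw [hξ, ← wline_comp η χ]
    rfl
  constructor
  · intro hne
    have h1 : gaussMap s t ξ ≠ 1 := by
      rw [hξ, gauss_mul]
      intro hc
      exact hne (inv_mul_eq_one.mp hc)
    obtain ⟨v0, hv0⟩ : ∃ v0, gaussMap s t ξ v0 ≠ 1 := by
      by_contra hc
      push_neg at hc
      exact h1 (funext hc)
    have hsum : (∑ g : V → G, ∏ v, ((gaussMap s t ξ v (g v) : ℂˣ) : ℂ)) = 0 := by
      rw [← Fintype.prod_sum (fun v x => ((gaussMap s t ξ v x : ℂˣ) : ℂ))]
      refine Finset.prod_eq_zero (Finset.mem_univ v0) ?_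
      have : (Units.coeHom ℂ).comp (gaussMap s t ξ v0) ≠ 1 := by
        intro hc
        apply hv0
        ext x
        have h2 := congrArg (fun φ => φ x) hc
        simpa using h2
      simpa using sum_hom_units_eq_zero ((Units.coeHom ℂ).comp (gaussMap s t ξ v0)) this
    rw [hcomp, key, hsum, mul_zero, zero_smul]
  · intro heq
    have h1 : gaussMap s t ξ = 1 := by
      rw [hξ, gauss_mul, heq]
      funext v
      ext x
      simp [Pi.mul_apply, Pi.inv_apply, MonoidHom.inv_apply]
    refine ⟨comm_of_gauss_one s t ξ h1, ?_⟩
    have hcard : ((Fintype.card G : ℂ) ^ Fintype.card V) ≠ 0 := by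
      apply pow_ne_zero
      exact_mod_cast Fintype.card_ne_zero
    have hsum : (∑ g : V → G, ∏ v, ((gaussMap s t ξ v (g v) : ℂˣ) : ℂ))
        = (Fintype.card G : ℂ) ^ Fintype.card V := by
      rw [h1]
      simp only [Pi.one_apply, MonoidHom.one_apply, Units.val_one, Finset.prod_const_one,
        Finset.sum_const, Finset.card_univ, nsmul_eq_mul, mul_one]
      rw [Fintype.card_fun]
      push_cast
      ring
    rw [hcomp, key, hsum, inv_mul_cancel₀ hcard, one_smul]
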